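/- arXiv:1905.08443 — 3 statements merged into one kernel-verified Lean document; each statement's English description precedes it below -/
import Mathlib

section
/- Consider two max-affine spline units on R^D with parameters A₁, A₂ : Fin R → R^D and B₁, B₂ : Fin R → ℝ. For indices i, j, the joint cell {x : unit 1 attains its max at i and unit 2 attains its max at j} equals the power-diagram cell with centroid μ(i,j) = A₁ i + A₂ j and radius rad(i,j) = 2(B₁ i + B₂ j) + ‖A₁ i + A₂ j‖². That is, x lies in the joint cell iff for all (i', j'), ‖x − μ(i,j)‖² − rad(i,j) ≤ ‖x − μ(i',j')‖² − rad(i',j'). -/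
open RealInnerProductSpace

theorem two_unit_joint_cell_eq_power_diagram_cell {D R : ℕ}
    (A₁ A₂ : Fin R → EuclideanSpace ℝ (Fin D)) (B₁ B₂ : Fin R → ℝ)
    (μ : Fin R → Fin R → EuclideanSpace ℝ (Fin D)) (rad : Fin R → Fin R → ℝ)
    (hμ : ∀ i j, μ i j = A₁ i + A₂ j)
    (hrad : ∀ i j, rad i j = 2 * (B₁ i + B₂ j) + ‖A₁ i + A₂ j‖ ^ 2)
    (i j : Fin R) :
    {x : EuclideanSpace ℝ (Fin D) |
        (∀ i', ⟪A₁ i, x⟫ + B₁ i ≥ ⟪A₁ i', x⟫ + B₁ i') ∧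
        (∀ j', ⟪A₂ j, x⟫ + B₂ j ≥ ⟪A₂ j', x⟫ + B₂ j')} =
      {x : EuclideanSpace ℝ (Fin D) |
        ∀ i' j', ‖x - μ i j‖ ^ 2 - rad i j ≤ ‖x - μ i' j'‖ ^ 2 - rad i' j'} := by
  have key : ∀ (x : EuclideanSpace ℝ (Fin D)) (a b : Fin R),
      ‖x - μ a b‖ ^ 2 - rad a b
        = ‖x‖ ^ 2 - 2 * ((⟪A₁ a, x⟫ + B₁ a) + (⟪A₂ b, x⟫ + B₂ b)) := by
    intro x a b
    rw [hμ, hrad, @norm_sub_sq_real, real_inner_comm, inner_add_left]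
    ring
  ext x
  simp only [Set.mem_setOf_eq]
  constructor
  · rintro ⟨h1, h2⟩ i' j'
    rw [key, key]
    have := add_le_add (h1 i') (h2 j')
    linarith
  · intro h
    constructor
    · intro i'
      have := h i' j
      rw [key, key] at this
      linarith
    · intro j'
      have := h i j'
      rw [key, key] at this
      linarith
end

section
/- Let K max-affine spline units on R^D have slopes A_k : Fin R → R^D and offsets B_k : Fin R → ℝ for k = 1,…,K. For a joint index vector r ∈ (Fin R)^K, define μ_r = Σ_k A_k (r k) and rad_r = 2 Σ_k B_k (r k) + ‖μ_r‖². Then x lies in the joint cell (each unit k attains its max at r k) if and only if Σ_k (⟨A_k (r k), x⟩ + B_k (r k)) ≥ Σ_k (⟨A_k (s k), x⟩ + B_k (s k)) for all s ∈ (Fin R)^K with equality of per-unit maxima, and the joint cell is contained in the power-diagram cell {x : ∀ s, ‖x − μ_r‖² − rad_r ≤ ‖x − μ_s‖² − rad_s}. -/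
open RealInnerProductSpace

theorem maso_joint_cell_characterization {D R K : ℕ}
    (A : Fin K → Fin R → EuclideanSpace ℝ (Fin D)) (B : Fin K → Fin R → ℝ)
    (μ : (Fin K → Fin R) → EuclideanSpace ℝ (Fin D)) (rad : (Fin K → Fin R) → ℝ)
    (hμ : ∀ r, μ r = ∑ k, A k (r k))
    (hrad : ∀ r, rad r = 2 * (∑ k, B k (r k)) + ‖μ r‖ ^ 2)
    (r : Fin K → Fin R) :
    (∀ x : EuclideanSpace ℝ (Fin D),
      (∀ k s, ⟪A k (r k), x⟫ + B k (r k) ≥ ⟪A k s, x⟫ + B k s) ↔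
        (∀ s : Fin K → Fin R,
          ∑ k, (⟪A k (r k), x⟫ + B k (r k)) ≥ ∑ k, (⟪A k (s k), x⟫ + B k (s k)))) ∧
    {x : EuclideanSpace ℝ (Fin D) |
        ∀ k s, ⟪A k (r k), x⟫ + B k (r k) ≥ ⟪A k s, x⟫ + B k s} ⊆
      {x : EuclideanSpace ℝ (Fin D) |
        ∀ s : Fin K → Fin R, ‖x - μ r‖ ^ 2 - rad r ≤ ‖x - μ s‖ ^ 2 - rad s} := by
  have key : ∀ (x : EuclideanSpace ℝ (Fin D))
      (hx : ∀ k s, ⟪A k (r k), x⟫ + B k (r k) ≥ ⟪A k s, x⟫ + B k s)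
      (s : Fin K → Fin R),
      ∑ k, (⟪A k (r k), x⟫ + B k (r k)) ≥ ∑ k, (⟪A k (s k), x⟫ + B k (s k)) :=
    fun x hx s => Finset.sum_le_sum fun k _ => hx k (s k)
  constructor
  · intro x
    constructor
    · exact key x
    · intro h k j
      have h2 := h (Function.update r k j)
      rw [← Finset.add_sum_erase _ _ (Finset.mem_univ k),
        ← Finset.add_sum_erase _ (fun k' => ⟪A k' (Function.update r k j k'), x⟫
          + B k' (Function.update r k j k')) (Finset.mem_univ k)] at h2
      have heq : ∑ k' ∈ Finset.univ.erase k,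
          (⟪A k' (Function.update r k j k'), x⟫ + B k' (Function.update r k j k')) =
          ∑ k' ∈ Finset.univ.erase k, (⟪A k' (r k'), x⟫ + B k' (r k')) := by
        refine Finset.sum_congr rfl fun k' hk' => ?_
        rw [Function.update_of_ne (Finset.ne_of_mem_erase hk')]
      rw [heq, Function.update_self] at h2
      linarith
  · intro x hx s
    have hsum := key x hx s
    have expand : ∀ t : Fin K → Fin R,
        ‖x - μ t‖ ^ 2 - rad t =
          ‖x‖ ^ 2 - 2 * (∑ k, (⟪A k (t k), x⟫ + B k (t k))) := by
      intro t
      have h1 : ‖x - μ t‖ ^ 2 = ‖x‖ ^ 2 - 2 * ⟪x, μ t⟫ + ‖μ t‖ ^ 2 := by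
        rw [norm_sub_sq_real]
      have h2 : ⟪x, μ t⟫ = ∑ k, ⟪A k (t k), x⟫ := by
        rw [hμ, inner_sum]
        exact Finset.sum_congr rfl fun k _ => real_inner_comm _ _
      rw [h1, hrad, h2, Finset.sum_add_distrib]
      ring
    rw [expand r, expand s]
    linarith
end

section
/- Let G : R^D → R^K be linear with transpose G^T, h ∈ R^K, and consider two max-affine units on R^K with slopes A₁, A₂ : Fin R → R^K and offsets B₁, B₂. The joint cell in x-space {x : both units attain their maxima at (i, j) when evaluated at Gx + h} equals the power-diagram cell in R^D with centroid G^T(A₁ i + A₂ j) and radius rad(i,j) = ‖G^T(A₁ i + A₂ j)‖² + 2⟨A₁ i + A₂ j, h⟩ + 2(B₁ i + B₂ j). -/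
open RealInnerProductSpace

theorem two_unit_affine_precomposed_joint_cell {D K R : ℕ}
    (G : EuclideanSpace ℝ (Fin D) →ₗ[ℝ] EuclideanSpace ℝ (Fin K))
    (h : EuclideanSpace ℝ (Fin K))
    (A₁ A₂ : Fin R → EuclideanSpace ℝ (Fin K)) (B₁ B₂ : Fin R → ℝ)
    (μ : Fin R → Fin R → EuclideanSpace ℝ (Fin D)) (rad : Fin R → Fin R → ℝ)
    (hμ : ∀ i j, μ i j = LinearMap.adjoint G (A₁ i + A₂ j))
    (hrad : ∀ i j, rad i j =
      ‖LinearMap.adjoint G (A₁ i + A₂ j)‖ ^ 2 + 2 * ⟪A₁ i + A₂ j, h⟫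
        + 2 * (B₁ i + B₂ j))
    (i j : Fin R) :
    {x : EuclideanSpace ℝ (Fin D) |
        (∀ i', ⟪A₁ i, G x + h⟫ + B₁ i ≥ ⟪A₁ i', G x + h⟫ + B₁ i') ∧
        (∀ j', ⟪A₂ j, G x + h⟫ + B₂ j ≥ ⟪A₂ j', G x + h⟫ + B₂ j')} =
      {x : EuclideanSpace ℝ (Fin D) |
        ∀ i' j', ‖x - μ i j‖ ^ 2 - rad i j ≤ ‖x - μ i' j'‖ ^ 2 - rad i' j'} := by
  ext x
  have key : ∀ i' j', ‖x - μ i' j'‖ ^ 2 - rad i' j' =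
      ‖x‖ ^ 2 - 2 * ((⟪A₁ i', G x + h⟫ + B₁ i') + (⟪A₂ j', G x + h⟫ + B₂ j')) := by
    intro i' j'
    rw [hμ, hrad]
    have h1 : ⟪x, LinearMap.adjoint G (A₁ i' + A₂ j')⟫
        = ⟪A₁ i' + A₂ j', G x⟫ := by
      rw [LinearMap.adjoint_inner_right, real_inner_comm]
    have h2 : ‖x - LinearMap.adjoint G (A₁ i' + A₂ j')‖ ^ 2
        = ‖x‖ ^ 2 - 2 * ⟪x, LinearMap.adjoint G (A₁ i' + A₂ j')⟫
          + ‖LinearMap.adjoint G (A₁ i' + A₂ j')‖ ^ 2 :=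
      norm_sub_sq_real _ _
    rw [h2, h1]
    simp only [inner_add_left, inner_add_right]
    ring
  simp only [Set.mem_setOf_eq]
  constructor
  · rintro ⟨h1, h2⟩ i' j'
    rw [key, key]
    have := h1 i'
    have := h2 j'
    linarith
  · intro H
    constructor
    · intro i'
      have := H i' j
      rw [key, key] at this
      linarith
    · intro j'
      have := H i j'
      rw [key, key] at this
      linarith
end
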